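/- Let K be the kernel of U + I acting on M(odd) = {(r^2+r)·g(r^2) : g ∈ Z/2[t]}. Then K is contained in the free Z/2[G^2]-module N2 with basis {G, F, F^2·G}. -/
import Mathlib

set_option maxHeartbeats 4000000
set_option maxRecDepth 4000

open Polynomial

noncomputable def Fp : Polynomial (ZMod 2) := X * (X + 1) ^ 3

noncomputable def Gp : Polynomial (ZMod 2) := X ^ 3 * (X + 1)

lemma aux_h2 : (2 : Polynomial (ZMod 2)) = 0 := CharTwo.two_eq_zero

lemma aux_descent (N : ℕ) : ∀ h : Polynomial (ZMod 2), h.natDegree ≤ N → ∀ k : ℕ,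
    (X+1)^(2*k+2) * h.comp ((X*(X+1)^3)^2) = X^(2*k+2) * h.comp ((X^3*(X+1))^2) → h = 0 := by
  induction N with
  | zero =>
    intro h hdeg k heq
    have hc := eq_C_of_natDegree_le_zero hdeg
    rw [hc, C_comp, C_comp] at heq
    have h0 := congrArg (eval 0) heq
    simp [zero_pow (by omega : 2*k+2 ≠ 0)] at h0
    rw [hc, h0, C_0]
  | succ n ih =>
    intro h hdeg k heq
    have h0 : h.eval 0 = 0 := by
      have h0 := congrArg (eval 0) heq
      simpa [eval_comp, zero_pow (by omega : 2*k+2 ≠ 0)] using h0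
    have hXd : X * h.divX = h := by
      have hh := X_mul_divX_add h
      rwa [coeff_zero_eq_eval_zero, h0, C_0, add_zero] at hh
    by_cases hd0 : h.divX = 0
    · rw [← hXd, hd0, mul_zero]
    · have hdeg' : h.divX.natDegree ≤ n := by
        have hnd : h.natDegree = 1 + h.divX.natDegree := by
          conv_lhs => rw [← hXd]
          rw [natDegree_mul X_ne_zero hd0, natDegree_X]
        omega
      have hne : (X^2*(X+1)^2 : Polynomial (ZMod 2)) ≠ 0 := by
        apply mul_ne_zero (pow_ne_zero _ X_ne_zero) (pow_ne_zero _ ?_)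
        intro hcon
        have := congrArg (eval 0) hcon
        simp at this
      have hdvx : h.divX = 0 := by
        refine ih h.divX hdeg' (k+2) ?_
        apply mul_left_cancel₀ hne
        rw [← hXd] at heq
        simp only [mul_comp, X_comp] at heq
        linear_combination heq
      rw [← hXd, hdvx, mul_zero]

lemma aux_decomp (g : Polynomial (ZMod 2)) : ∃ a b c d : Polynomial (ZMod 2),
    (X^2+X) * g.comp (X^2) =
      a.comp ((X^3*(X+1))^2) * (X^2+X)
      + b.comp ((X^3*(X+1))^2) * ((X^2+X)*X^2)
      + c.comp ((X^3*(X+1))^2) * ((X^2+X)*X^4)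
      + d.comp ((X^3*(X+1))^2) * ((X^2+X)*X^6) := by
  induction g using Polynomial.induction_on with
  | C r =>
    exact ⟨C r, 0, 0, 0, by simp only [C_comp, zero_comp, zero_mul, add_zero]; ring⟩
  | add p q hp hq =>
    obtain ⟨a,b,c,d,hp⟩ := hp; obtain ⟨a',b',c',d',hq⟩ := hq
    exact ⟨a+a', b+b', c+c', d+d', by
      simp only [add_comp]
      linear_combination hp + hq⟩
  | monomial n r ih =>
    obtain ⟨a,b,c,d,ih⟩ := ih
    refine ⟨d*X, a, b, c+d, ?_⟩
    have hstep : ((C r * X^(n+1)).comp (X^2) : Polynomial (ZMod 2))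
        = X^2 * (C r * X^n).comp (X^2) := by
      simp only [mul_comp, C_comp, pow_comp, X_comp, pow_succ]; ring
    have hdx : ((d*X).comp ((X^3*(X+1))^2) : Polynomial (ZMod 2))
        = d.comp ((X^3*(X+1))^2) * ((X^3*(X+1))^2) := by rw [mul_comp, X_comp]
    rw [hstep, hdx, add_comp]
    linear_combination (X^2 : Polynomial (ZMod 2)) * ih
      - (d.comp ((X^3*(X+1))^2)) * (X^9+2*X^8+X^7) * aux_h2

lemma aux_vc : (((X*(X+1)^3 : Polynomial (ZMod 2))^2).comp (X+1)) = (X^3*(X+1))^2 := by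
  simp only [pow_comp, mul_comp, add_comp, X_comp, one_comp]
  linear_combination ((32)
      + (160)*(X)
      + (344)*(X)^2
      + (416)*(X)^3
      + (310)*(X)^4
      + (146)*(X)^5
      + (42)*(X)^6
      + (6)*(X)^7 : Polynomial (ZMod 2)) * aux_h2

lemma aux_wc : (((X^3*(X+1) : Polynomial (ZMod 2))^2).comp (X+1)) = (X*(X+1)^3)^2 := by
  simp only [pow_comp, mul_comp, add_comp, X_comp, one_comp]
  linear_combination ((2)
      + (14)*(X)
      + (42)*(X)^2
      + (70)*(X)^3
      + (70)*(X)^4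
      + (42)*(X)^5
      + (14)*(X)^6
      + (2)*(X)^7 : Polynomial (ZMod 2)) * aux_h2

theorem stmt18 (U : Polynomial (ZMod 2) →ₗ[ZMod 2] Polynomial (ZMod 2))
    (hsemi : ∀ f, U (X ^ 3 * (X + 1) * f) = X * (X + 1) ^ 3 * U f)
    (h0 : U 1 = 1) (h1 : U X = X) (h2 : U (X ^ 2) = X ^ 2)
    (h3 : U (X ^ 3) = X ^ 3 + X ^ 2 + X) :
    ∀ f : Polynomial (ZMod 2),
      (∃ g : Polynomial (ZMod 2), f = (X ^ 2 + X) * g.comp (X ^ 2)) →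
      U f + f = 0 →
      ∃ p q s : Polynomial (ZMod 2),
        f = p.comp (Gp ^ 2) * Gp + q.comp (Gp ^ 2) * Fp + s.comp (Gp ^ 2) * (Fp ^ 2 * Gp) := by
  have hsemi2 : ∀ k : Polynomial (ZMod 2),
      U ((X^3*(X+1))^2 * k) = (X*(X+1)^3)^2 * U k := by
    intro k
    have e : ((X^3*(X+1))^2 : Polynomial (ZMod 2)) * k = X^3*(X+1) * (X^3*(X+1) * k) := by
      ring
    rw [e, hsemi, hsemi]; ring
  have semilin : ∀ p k : Polynomial (ZMod 2),
      U (p.comp ((X^3*(X+1))^2) * k) = p.comp ((X*(X+1)^3)^2) * U k := by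
    intro p
    induction p using Polynomial.induction_on with
    | C r =>
      intro k
      rw [C_comp, C_comp, ← smul_eq_C_mul, ← smul_eq_C_mul, map_smul]
    | add p q hp hq =>
      intro k
      simp only [add_comp, add_mul, map_add, hp, hq]
    | monomial n r ih =>
      intro k
      have e1 : ((C r * X^(n+1)).comp ((X^3*(X+1))^2) : Polynomial (ZMod 2)) * k
          = (X^3*(X+1))^2 * ((C r * X^n).comp ((X^3*(X+1))^2) * k) := by
        rw [mul_comp, mul_comp, pow_comp, pow_comp, X_comp, C_comp]; ring
      rw [e1, hsemi2, ih, mul_comp, mul_comp, pow_comp, pow_comp, X_comp, C_comp]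
      ring
  have hU1 : U (X^2+X) = X^2+X := by rw [map_add, h2, h1]
  have hU2 : U ((X^2+X)*X^2) = X*(X+1)^3 := by
    rw [show ((X^2+X)*X^2 : Polynomial (ZMod 2)) = X^3*(X+1)*1 by ring, hsemi, h0, mul_one]
  have hU3 : U ((X^2+X)*X^4) = X*(X+1)^3*X^2 := by
    rw [show ((X^2+X)*X^4 : Polynomial (ZMod 2)) = X^3*(X+1)*X^2 by ring, hsemi, h2]
  have hUX4 : U (X^4) = X*(X+1)^3 + (X^3+X^2+X) := by
    rw [show (X^4 : Polynomial (ZMod 2)) = X^3*(X+1)*1 + X^3 from by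
          linear_combination (-(X^3) : Polynomial (ZMod 2)) * aux_h2,
      map_add, hsemi, h0, mul_one, h3]
  have hU4 : U ((X^2+X)*X^6) = X*(X+1)^3*(X*(X+1)^3 + (X^3+X^2+X)) := by
    rw [show ((X^2+X)*X^6 : Polynomial (ZMod 2)) = X^3*(X+1)*X^4 by ring, hsemi, hUX4]
  intro f hodd hker
  obtain ⟨g, hg⟩ := hodd
  obtain ⟨a, b, c, d, hf⟩ := aux_decomp g
  rw [← hg] at hf
  have hUf : U f = a.comp ((X*(X+1)^3)^2) * (X^2+X)
      + b.comp ((X*(X+1)^3)^2) * (X*(X+1)^3)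
      + c.comp ((X*(X+1)^3)^2) * (X*(X+1)^3*X^2)
      + d.comp ((X*(X+1)^3)^2) * (X*(X+1)^3*(X*(X+1)^3 + (X^3+X^2+X))) := by
    rw [hf, map_add, map_add, map_add, semilin, semilin, semilin, semilin,
      hU1, hU2, hU3, hU4]
  rw [hUf, hf] at hker
  have htau := congrArg (fun z : Polynomial (ZMod 2) => z.comp (X+1)) hker
  simp only [add_comp, mul_comp, zero_comp] at htau
  simp only [comp_assoc] at htau
  simp only [aux_vc, aux_wc] at htau
  simp only [pow_comp, add_comp, X_comp, one_comp] at htau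
  have key : (c.comp ((X*(X+1)^3)^2) + d.comp ((X*(X+1)^3)^2)) * (X*(X+1)^3)
      + (c.comp ((X^3*(X+1))^2) + d.comp ((X^3*(X+1))^2)) * (X^3*(X+1)) = 0 := by
    linear_combination hker + htau - ((1)*(d.comp ((X*(X+1)^3)^2))
      + (1)*(c.comp ((X*(X+1)^3)^2))
      + (1)*(b.comp ((X*(X+1)^3)^2))
      + (1)*(a.comp ((X*(X+1)^3)^2))
      + (44)*(d.comp ((X^3*(X+1))^2))
      + (4)*(c.comp ((X^3*(X+1))^2))
      + (4)*(b.comp ((X^3*(X+1))^2))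
      + (1)*(a.comp ((X^3*(X+1))^2))
      + (7)*(X)*(d.comp ((X*(X+1)^3)^2))
      + (5)*(X)*(c.comp ((X*(X+1)^3)^2))
      + (4)*(X)*(b.comp ((X*(X+1)^3)^2))
      + (2)*(X)*(a.comp ((X*(X+1)^3)^2))
      + (214)*(X)*(d.comp ((X^3*(X+1))^2))
      + (18)*(X)*(c.comp ((X^3*(X+1))^2))
      + (10)*(X)*(b.comp ((X^3*(X+1))^2))
      + (2)*(X)*(a.comp ((X^3*(X+1))^2))
      + (24)*(X)^2*(d.comp ((X*(X+1)^3)^2))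
      + (11)*(X)^2*(c.comp ((X*(X+1)^3)^2))
      + (6)*(X)^2*(b.comp ((X*(X+1)^3)^2))
      + (1)*(X)^2*(a.comp ((X*(X+1)^3)^2))
      + (447)*(X)^2*(d.comp ((X^3*(X+1))^2))
      + (33)*(X)^2*(c.comp ((X^3*(X+1))^2))
      + (9)*(X)^2*(b.comp ((X^3*(X+1))^2))
      + (1)*(X)^2*(a.comp ((X^3*(X+1))^2))
      + (49)*(X)^3*(d.comp ((X*(X+1)^3)^2))
      + (14)*(X)^3*(c.comp ((X*(X+1)^3)^2))
      + (4)*(X)^3*(b.comp ((X*(X+1)^3)^2))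
      + (524)*(X)^3*(d.comp ((X^3*(X+1))^2))
      + (31)*(X)^3*(c.comp ((X^3*(X+1))^2))
      + (4)*(X)^3*(b.comp ((X^3*(X+1))^2))
      + (63)*(X)^4*(d.comp ((X*(X+1)^3)^2))
      + (11)*(X)^4*(c.comp ((X*(X+1)^3)^2))
      + (1)*(X)^4*(b.comp ((X*(X+1)^3)^2))
      + (378)*(X)^4*(d.comp ((X^3*(X+1))^2))
      + (16)*(X)^4*(c.comp ((X^3*(X+1))^2))
      + (1)*(X)^4*(b.comp ((X^3*(X+1))^2))
      + (52)*(X)^5*(d.comp ((X*(X+1)^3)^2))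
      + (5)*(X)^5*(c.comp ((X*(X+1)^3)^2))
      + (172)*(X)^5*(d.comp ((X^3*(X+1))^2))
      + (5)*(X)^5*(c.comp ((X^3*(X+1))^2))
      + (27)*(X)^6*(d.comp ((X*(X+1)^3)^2))
      + (1)*(X)^6*(c.comp ((X*(X+1)^3)^2))
      + (48)*(X)^6*(d.comp ((X^3*(X+1))^2))
      + (1)*(X)^6*(c.comp ((X^3*(X+1))^2))
      + (8)*(X)^7*(d.comp ((X*(X+1)^3)^2))
      + (8)*(X)^7*(d.comp ((X^3*(X+1))^2))
      + (1)*(X)^8*(d.comp ((X*(X+1)^3)^2))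
      + (1)*(X)^8*(d.comp ((X^3*(X+1))^2)) : Polynomial (ZMod 2)) * aux_h2
  have hne : (X*(X+1) : Polynomial (ZMod 2)) ≠ 0 := by
    apply mul_ne_zero X_ne_zero
    intro hcon
    have := congrArg (eval 0) hcon
    simp at this
  have hcd : c + d = 0 := by
    refine aux_descent ((c+d).natDegree) (c+d) le_rfl 0 ?_
    rw [add_comp, add_comp]
    apply mul_left_cancel₀ hne
    linear_combination key
      - (X^3*(X+1)*(c.comp ((X^3*(X+1))^2) + d.comp ((X^3*(X+1))^2))) * aux_h2
  have hdc : d = c := by linear_combination hcd - c * aux_h2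
  rw [hdc] at hf
  refine ⟨b + a + c*X, a, c, ?_⟩
  rw [hf]
  unfold Fp Gp
  simp only [add_comp, mul_comp, X_comp]
  linear_combination ((-1)*(X)^2*(a.comp ((X^3*(X+1))^2))
      + (-2)*(X)^3*(a.comp ((X^3*(X+1))^2))
      + (-1)*(X)^4*(a.comp ((X^3*(X+1))^2))
      + (-3)*(X)^6*(c.comp ((X^3*(X+1))^2))
      + (-10)*(X)^7*(c.comp ((X^3*(X+1))^2))
      + (-17)*(X)^8*(c.comp ((X^3*(X+1))^2))
      + (-18)*(X)^9*(c.comp ((X^3*(X+1))^2))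
      + (-12)*(X)^10*(c.comp ((X^3*(X+1))^2))
      + (-5)*(X)^11*(c.comp ((X^3*(X+1))^2))
      + (-1)*(X)^12*(c.comp ((X^3*(X+1))^2)) : Polynomial (ZMod 2)) * aux_h2
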